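/- arXiv:2502.15106 — 10 statements merged into one kernel-verified Lean document; each statement's English description precedes it below -/
import Mathlib

section
/- Under the assumptions above, G(w) ≥ (p+2) F(w) for every w ∈ ℝ⁴. -/
open RealInnerProductSpace

/-- Lemma (Esfahani–Levandosky type), item (i): under condition (a),
`G(w) ≥ (p+2) F(w)` for every `w ∈ ℝ⁴`. -/
theorem stmt_0 (p : ℝ) (hp : 0 < p)
    (F : EuclideanSpace ℝ (Fin 4) → ℝ)
    (hF : ContDiff ℝ 2 F) (hF0 : F 0 = 0)
    (G : EuclideanSpace ℝ (Fin 4) → ℝ)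
    (hG : ∀ w, G w = ⟪w, gradient F w⟫)
    (ha : ∀ w, ⟪w, gradient G w⟫ ≥ (p + 2) * G w) :
    ∀ w, G w ≥ (p + 2) * F w := by
  have hp2 : (0:ℝ) < p + 2 := by linarith
  have hFd : Differentiable ℝ F := hF.differentiable (by norm_num)
  have keyF : ∀ (x v : EuclideanSpace ℝ (Fin 4)), ⟪gradient F x, v⟫ = fderiv ℝ F x v := by
    intro x v; rw [gradient, InnerProductSpace.toDual_symm_apply]
  have keyG : ∀ (x v : EuclideanSpace ℝ (Fin 4)), ⟪gradient G x, v⟫ = fderiv ℝ G x v := by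
    intro x v; rw [gradient, InnerProductSpace.toDual_symm_apply]
  have hgradF : ContDiff ℝ 1 (gradient F) :=
    (InnerProductSpace.toDual ℝ _).symm.contDiff.comp (hF.fderiv_right (le_refl _))
  have hGc : ContDiff ℝ 1 G := by
    have h1 : ContDiff ℝ 1 (fun w => ⟪w, gradient F w⟫) := contDiff_id.inner ℝ hgradF
    have : G = fun w => ⟪w, gradient F w⟫ := funext hG
    rw [this]; exact h1
  have hGd : Differentiable ℝ G := hGc.differentiable (by norm_num)
  intro w
  set f : ℝ → ℝ := fun t => F (t • w) with hfdef
  set g : ℝ → ℝ := fun t => G (t • w) with hgdef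
  have hsmul : ∀ t : ℝ, HasDerivAt (fun s : ℝ => s • w) w t := by
    intro t
    simpa using (hasDerivAt_id t).smul_const w
  have hfd : ∀ t : ℝ, HasDerivAt f (fderiv ℝ F (t • w) w) t := fun t =>
    (hFd (t • w)).hasFDerivAt.comp_hasDerivAt t (hsmul t)
  have hgd : ∀ t : ℝ, HasDerivAt g (fderiv ℝ G (t • w) w) t := fun t =>
    (hGd (t • w)).hasFDerivAt.comp_hasDerivAt t (hsmul t)
  -- g t = t * f'(t)
  have hgf : ∀ t : ℝ, g t = t * fderiv ℝ F (t • w) w := by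
    intro t
    rw [hgdef]
    simp only
    rw [hG, real_inner_smul_left, real_inner_comm, keyF]
  -- condition: t * g'(t) ≥ (p+2) g t
  have hcond : ∀ t : ℝ, t * fderiv ℝ G (t • w) w ≥ (p + 2) * g t := by
    intro t
    have := ha (t • w)
    rwa [real_inner_smul_left, real_inner_comm, keyG] at this
  -- Step A : g t ≤ g 1 * t ^ (p+2) for t ∈ (0,1]
  have stepA : ∀ t : ℝ, 0 < t → t ≤ 1 → g t ≤ g 1 * t ^ (p + 2) := by
    intro t ht0 ht1
    set c : ℝ := -(p + 2) with hc
    set q : ℝ → ℝ := fun s => g s * s ^ c with hq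
    have hqd : ∀ s : ℝ, 0 < s →
        HasDerivAt q (fderiv ℝ G (s • w) w * s ^ c + g s * (c * s ^ (c - 1))) s := by
      intro s hs
      exact (hgd s).mul (Real.hasDerivAt_rpow_const (Or.inl hs.ne'))
    have hmono : MonotoneOn q (Set.Icc t 1) := by
      apply monotoneOn_of_deriv_nonneg (convex_Icc t 1)
      · intro s hs
        exact ((hqd s (lt_of_lt_of_le ht0 hs.1)).continuousAt).continuousWithinAt
      · intro s hs
        rw [interior_Icc] at hs
        exact ((hqd s (lt_trans ht0 hs.1)).differentiableAt).differentiableWithinAt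
      · intro s hs
        rw [interior_Icc] at hs
        have hs0 : 0 < s := lt_trans ht0 hs.1
        rw [(hqd s hs0).deriv]
        have hsc : s ^ c = s ^ (c - 1) * s := by
          nth_rewrite 1 [show c = c - 1 + 1 by ring]
          rw [Real.rpow_add hs0, Real.rpow_one]
        rw [hsc]
        have key : fderiv ℝ G (s • w) w * (s ^ (c - 1) * s) + g s * (c * s ^ (c - 1))
            = s ^ (c - 1) * (s * fderiv ℝ G (s • w) w - (p + 2) * g s) := by
          rw [hc]; ring
        rw [key]
        have h1 : (0:ℝ) ≤ s ^ (c - 1) := Real.rpow_nonneg hs0.le _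
        have h2 : (0:ℝ) ≤ s * fderiv ℝ G (s • w) w - (p + 2) * g s :=
          sub_nonneg.mpr (hcond s)
        positivity
    have hqt : q t ≤ q 1 := hmono ⟨le_refl t, ht1⟩ ⟨ht1, le_refl 1⟩ ht1
    have hq1 : q 1 = g 1 := by rw [hq]; simp [Real.one_rpow]
    rw [hq1] at hqt
    have hmul := mul_le_mul_of_nonneg_right hqt (Real.rpow_nonneg ht0.le (p + 2))
    have hcancel : g t * t ^ c * t ^ (p + 2) = g t := by
      rw [mul_assoc, ← Real.rpow_add ht0, hc, neg_add_cancel, Real.rpow_zero, mul_one]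
    rwa [hcancel] at hmul
  -- Step B : H t = g 1 / (p+2) * t^(p+2) - f t monotone on [0,1]
  set H : ℝ → ℝ := fun t => g 1 / (p + 2) * t ^ (p + 2) - f t with hH
  have hmonoH : MonotoneOn H (Set.Icc (0:ℝ) 1) := by
    apply monotoneOn_of_deriv_nonneg (convex_Icc 0 1)
    · apply Continuous.continuousOn
      apply Continuous.sub
      · apply Continuous.mul continuous_const
        exact continuous_iff_continuousAt.mpr fun x =>
          Real.continuousAt_rpow_const x (p + 2) (Or.inr hp2.le)
      · exact hF.continuous.comp (by continuity)
    · intro s hs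
      rw [interior_Icc] at hs
      have hds : HasDerivAt H (g 1 / (p + 2) * ((p + 2) * s ^ (p + 2 - 1)) - fderiv ℝ F (s • w) w) s :=
        ((Real.hasDerivAt_rpow_const (Or.inl hs.1.ne')).const_mul _).sub (hfd s)
      exact hds.differentiableAt.differentiableWithinAt
    · intro s hs
      rw [interior_Icc] at hs
      obtain ⟨hs0, hs1⟩ := hs
      have hds : HasDerivAt H (g 1 / (p + 2) * ((p + 2) * s ^ (p + 2 - 1)) - fderiv ℝ F (s • w) w) s :=
        ((Real.hasDerivAt_rpow_const (Or.inl hs0.ne')).const_mul _).sub (hfd s)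
      rw [hds.deriv]
      have hsimp : g 1 / (p + 2) * ((p + 2) * s ^ (p + 2 - 1)) = g 1 * s ^ (p + 1) := by
        rw [show p + 2 - 1 = p + 1 by ring]
        field_simp
      rw [hsimp]
      have hA : s * fderiv ℝ F (s • w) w ≤ g 1 * s ^ (p + 1) * s := by
        have := stepA s hs0 hs1.le
        rw [hgf s] at this
        have hpow : s ^ (p + 2) = s ^ (p + 1) * s := by
          rw [show p + 2 = p + 1 + 1 by ring, Real.rpow_add hs0, Real.rpow_one]
        rw [hpow] at this
        linarith [this]
      have hA' : fderiv ℝ F (s • w) w * s ≤ g 1 * s ^ (p + 1) * s := by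
        rw [mul_comm] at hA; exact hA
      have := le_of_mul_le_mul_right hA' hs0
      linarith
  have hH01 : H 0 ≤ H 1 := hmonoH ⟨le_refl 0, zero_le_one⟩ ⟨zero_le_one, le_refl 1⟩ zero_le_one
  have hH0 : H 0 = 0 := by
    rw [hH]; simp only
    rw [Real.zero_rpow hp2.ne', hfdef]
    simp [hF0]
  have hH1 : H 1 = g 1 / (p + 2) - f 1 := by
    rw [hH]; simp [Real.one_rpow]
  rw [hH0, hH1] at hH01
  have hf1 : f 1 = F w := by rw [hfdef]; simp
  have hg1 : g 1 = G w := by rw [hgdef]; simp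
  rw [hf1, hg1] at hH01
  have hfle : F w ≤ G w / (p + 2) := by linarith
  have := (le_div_iff₀ hp2).mp hfle
  linarith
end

section
/- Under the assumptions above, for every w ∈ ℝ⁴: if α ≥ 1 then G(αw) ≥ α^{p+2} G(w), and if 0 < α ≤ 1 then G(αw) ≤ α^{p+2} G(w). -/
open RealInnerProductSpace

/-- Lemma (Esfahani–Levandosky type), item (ii) for `G`: under condition (a),
`G(αw) ≥ α^(p+2) G(w)` for `α ≥ 1` and `G(αw) ≤ α^(p+2) G(w)` for `0 < α ≤ 1`. -/
theorem stmt_1 (p : ℝ) (hp : 0 < p)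
    (F : EuclideanSpace ℝ (Fin 4) → ℝ)
    (hF : ContDiff ℝ 2 F) (hF0 : F 0 = 0)
    (G : EuclideanSpace ℝ (Fin 4) → ℝ)
    (hG : ∀ w, G w = ⟪w, gradient F w⟫)
    (ha : ∀ w, ⟪w, gradient G w⟫ ≥ (p + 2) * G w) :
    ∀ (w : EuclideanSpace ℝ (Fin 4)) (α : ℝ),
      (1 ≤ α → G (α • w) ≥ α ^ (p + 2) * G w) ∧
      (0 < α → α ≤ 1 → G (α • w) ≤ α ^ (p + 2) * G w) := by
  -- G is C¹, hence differentiable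
  have hgradF : ContDiff ℝ 1 (gradient F) := by
    have h1 : ContDiff ℝ 1 (fderiv ℝ F) := hF.fderiv_right (by norm_num)
    have h2 : gradient F =
        fun x => (InnerProductSpace.toDual ℝ (EuclideanSpace ℝ (Fin 4))).symm (fderiv ℝ F x) :=
      rfl
    rw [h2]
    exact (InnerProductSpace.toDual ℝ (EuclideanSpace ℝ (Fin 4))).symm.contDiff.comp h1
  have hGc : ContDiff ℝ 1 G := by
    have h2 : G = fun x => ⟪x, gradient F x⟫ := funext fun x => hG x
    rw [h2]
    exact contDiff_id.inner ℝ hgradF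
  have hGd : Differentiable ℝ G := hGc.differentiable one_ne_zero
  intro w α
  set φ : ℝ → ℝ := fun t => G (t • w) with hφdef
  have hφd : ∀ t : ℝ, HasDerivAt φ (⟪w, gradient G (t • w)⟫) t := by
    intro t
    have h1 : HasDerivAt (fun s : ℝ => s • w) w t := by
      simpa using (hasDerivAt_id t).smul_const w
    have h2 := ((hGd (t • w)).hasGradientAt.hasFDerivAt).comp_hasDerivAt t h1
    have h3 : (InnerProductSpace.toDual ℝ (EuclideanSpace ℝ (Fin 4)) (gradient G (t • w))) w
        = ⟪w, gradient G (t • w)⟫ := by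
      rw [InnerProductSpace.toDual_apply_apply, real_inner_comm]
    rw [h3] at h2
    exact h2
  set c : ℝ := -(p + 2) with hc
  set h : ℝ → ℝ := fun t => t ^ c * φ t with hhdef
  have hder : ∀ t : ℝ, 0 < t →
      HasDerivAt h (t ^ (c - 1) * (t * ⟪w, gradient G (t • w)⟫ - (p + 2) * φ t)) t := by
    intro t ht
    have h1 : HasDerivAt (fun s : ℝ => s ^ c) (c * t ^ (c - 1)) t :=
      Real.hasDerivAt_rpow_const (Or.inl ht.ne')
    have h2 := h1.mul (hφd t)
    refine h2.congr_deriv ?_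
    have h3 : t ^ c = t ^ (c - 1) * t := by
      rw [← Real.rpow_add_one ht.ne']; ring_nf
    rw [h3, hc]; ring
  have hd0 : ∀ t : ℝ, 0 < t →
      0 ≤ t ^ (c - 1) * (t * ⟪w, gradient G (t • w)⟫ - (p + 2) * φ t) := by
    intro t ht
    apply mul_nonneg (Real.rpow_nonneg ht.le _)
    rw [sub_nonneg]
    have h4 := ha (t • w)
    rwa [real_inner_smul_left] at h4
  have hmono : MonotoneOn h (Set.Ioi (0 : ℝ)) := by
    apply monotoneOn_of_deriv_nonneg (convex_Ioi 0)
    · intro t ht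
      exact ((hder t ht).continuousAt).continuousWithinAt
    · intro t ht
      rw [interior_Ioi] at ht
      exact ((hder t ht).differentiableAt).differentiableWithinAt
    · intro t ht
      rw [interior_Ioi] at ht
      rw [(hder t ht).deriv]
      exact hd0 t ht
  have h1v : h 1 = G w := by
    simp [hhdef, hφdef]
  constructor
  · intro hα
    have hα0 : (0 : ℝ) < α := lt_of_lt_of_le one_pos hα
    have hle : h 1 ≤ h α := hmono (Set.mem_Ioi.2 one_pos) (Set.mem_Ioi.2 hα0) hα
    rw [h1v] at hle
    have hαc : α ^ c = (α ^ (p + 2))⁻¹ := by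
      rw [hc, Real.rpow_neg hα0.le]
    have hpos : (0 : ℝ) < α ^ (p + 2) := Real.rpow_pos_of_pos hα0 _
    have : G w ≤ (α ^ (p + 2))⁻¹ * G (α • w) := by
      simpa [hhdef, hφdef, hαc] using hle
    rw [ge_iff_le, ← le_inv_mul_iff₀ hpos]
    exact this
  · intro hα0 hα1
    have hle : h α ≤ h 1 := hmono (Set.mem_Ioi.2 hα0) (Set.mem_Ioi.2 one_pos) hα1
    rw [h1v] at hle
    have hαc : α ^ c = (α ^ (p + 2))⁻¹ := by
      rw [hc, Real.rpow_neg hα0.le]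
    have hpos : (0 : ℝ) < α ^ (p + 2) := Real.rpow_pos_of_pos hα0 _
    have h5 : (α ^ (p + 2))⁻¹ * G (α • w) ≤ G w := by
      simpa [hhdef, hφdef, hαc] using hle
    rw [← inv_mul_le_iff₀ hpos]
    exact h5
end

section
/- Under the assumptions above, for every w ∈ ℝ⁴: if α ≥ 1 then F(αw) ≥ α^{p+2} F(w), and if 0 < α ≤ 1 then F(αw) ≤ α^{p+2} F(w). -/
open RealInnerProductSpace InnerProductSpace

noncomputable section
variable {E : Type*} [NormedAddCommGroup E] [InnerProductSpace ℝ E] [CompleteSpace E]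

lemma line_deriv' {f : E → ℝ} (hf : Differentiable ℝ f) (w : E) (t : ℝ) :
    HasDerivAt (fun s : ℝ => f (s • w)) ⟪w, gradient f (t • w)⟫ t := by
  have h1 : HasDerivAt (fun s : ℝ => s • w) w t := by
    simpa using (hasDerivAt_id t).smul_const w
  have h2 := ((hf (t • w)).hasGradientAt).hasFDerivAt
  have h3 := h2.comp_hasDerivAt t h1
  simpa [InnerProductSpace.toDual_apply_apply, real_inner_comm, Function.comp_def] using h3

-- stage 1: (p+2) F v ≤ G v
lemma key1 {p : ℝ} (hp : 0 < p) (F : E → ℝ) (hF : ContDiff ℝ 2 F) (hF0 : F 0 = 0)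
    (G : E → ℝ) (hG : ∀ w, G w = ⟪w, gradient F w⟫)
    (ha : ∀ w, ⟪w, gradient G w⟫ ≥ (p + 2) * G w) (v : E) :
    (p + 2) * F v ≤ G v := by
  have hFd : Differentiable ℝ F := hF.differentiable (by norm_num)
  have hGd : Differentiable ℝ G := by
    have h1 : ContDiff ℝ 1 (fderiv ℝ F) := hF.fderiv_right (by norm_num)
    have hgrad : Differentiable ℝ (gradient F) := by
      have heq : gradient F = fun x => (toDual ℝ E).symm (fderiv ℝ F x) := rfl
      rw [heq]
      exact (toDual ℝ E).symm.toContinuousLinearEquiv.differentiable.comp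
        (h1.differentiable one_ne_zero)
    have : G = fun w => ⟪w, gradient F w⟫ := funext hG
    rw [this]
    exact differentiable_id.inner ℝ hgrad
  -- h(t) = G(t•v) - (p+2) F(t•v)
  set h : ℝ → ℝ := fun t => G (t • v) - (p + 2) * F (t • v) with hh
  have hderiv : ∀ t : ℝ, HasDerivAt h
      (⟪v, gradient G (t • v)⟫ - (p + 2) * ⟪v, gradient F (t • v)⟫) t := fun t =>
    (line_deriv' hGd v t).sub ((line_deriv' hFd v t).const_mul (p + 2))
  have hmono : MonotoneOn h (Set.Icc (0:ℝ) 1) := by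
    apply monotoneOn_of_deriv_nonneg (convex_Icc 0 1)
    · exact fun t _ => ((hderiv t).continuousAt).continuousWithinAt
    · exact fun t _ => ((hderiv t).differentiableAt).differentiableWithinAt
    · intro t ht
      rw [interior_Icc] at ht
      rw [(hderiv t).deriv]
      have ht0 : 0 < t := ht.1
      have hGs : G (t • v) = t * ⟪v, gradient F (t • v)⟫ := by
        rw [hG (t • v), real_inner_smul_left]
      have ha' := ha (t • v)
      rw [real_inner_smul_left] at ha'
      -- t * ⟪v, ∇G(tv)⟫ ≥ (p+2) * G(tv) = (p+2) * t * ⟪v,∇F(tv)⟫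
      rw [hGs] at ha'
      nlinarith [ha']
  have h0 : h 0 = 0 := by
    simp [hh, hF0, hG 0]
  have := hmono (Set.mem_Icc.2 ⟨le_refl 0, zero_le_one⟩) (Set.mem_Icc.2 ⟨zero_le_one, le_refl 1⟩) zero_le_one
  rw [h0] at this
  simpa [hh] using this

/-- Lemma (Esfahani–Levandosky type), item (ii) for `F`: under condition (a),
`F(αw) ≥ α^(p+2) F(w)` for `α ≥ 1` and `F(αw) ≤ α^(p+2) F(w)` for `0 < α ≤ 1`. -/
theorem stmt_2 (p : ℝ) (hp : 0 < p)
    (F : EuclideanSpace ℝ (Fin 4) → ℝ)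
    (hF : ContDiff ℝ 2 F) (hF0 : F 0 = 0)
    (G : EuclideanSpace ℝ (Fin 4) → ℝ)
    (hG : ∀ w, G w = ⟪w, gradient F w⟫)
    (ha : ∀ w, ⟪w, gradient G w⟫ ≥ (p + 2) * G w) :
    ∀ (w : EuclideanSpace ℝ (Fin 4)) (α : ℝ),
      (1 ≤ α → F (α • w) ≥ α ^ (p + 2) * F w) ∧
      (0 < α → α ≤ 1 → F (α • w) ≤ α ^ (p + 2) * F w) := by
  intro w α
  have hFd : Differentiable ℝ F := hF.differentiable (by norm_num)
  have key := key1 hp F hF hF0 G hG ha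
  -- φ(α) = α^(-(p+2)) * F(α•w), monotone on Ioi 0
  set φ : ℝ → ℝ := fun s => s ^ (-(p + 2)) * F (s • w) with hφ
  have hd : ∀ s : ℝ, 0 < s → HasDerivAt φ
      ((-(p + 2)) * s ^ (-(p + 2) - 1) * F (s • w)
        + s ^ (-(p + 2)) * ⟪w, gradient F (s • w)⟫) s := by
    intro s hs
    exact (Real.hasDerivAt_rpow_const (Or.inl hs.ne')).mul (line_deriv' hFd w s)
  have hd_nonneg : ∀ s : ℝ, 0 < s → 0 ≤ ((-(p + 2)) * s ^ (-(p + 2) - 1) * F (s • w)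
        + s ^ (-(p + 2)) * ⟪w, gradient F (s • w)⟫) := by
    intro s hs
    have hGs : G (s • w) = s * ⟪w, gradient F (s • w)⟫ := by
      rw [hG (s • w), real_inner_smul_left]
    have hk := key (s • w)
    rw [hGs] at hk
    have h1 : s ^ (-(p + 2)) = s * s ^ (-(p + 2) - 1) := by
      rw [← Real.rpow_one_add' hs.le (by intro h; nlinarith [h])]
      ring_nf
    have h2 : (0:ℝ) < s ^ (-(p + 2) - 1) := Real.rpow_pos_of_pos hs _
    rw [h1]
    nlinarith [h2, hk]
  have hmono : MonotoneOn φ (Set.Ioi (0:ℝ)) := by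
    apply monotoneOn_of_deriv_nonneg (convex_Ioi 0)
    · exact fun s hs => ((hd s hs).continuousAt).continuousWithinAt
    · intro s hs
      rw [interior_Ioi] at hs
      exact ((hd s hs).differentiableAt).differentiableWithinAt
    · intro s hs
      rw [interior_Ioi] at hs
      rw [(hd s hs).deriv]
      exact hd_nonneg s hs
  have hφ1 : φ 1 = F w := by simp [hφ]
  constructor
  · intro h1α
    have hα : (0:ℝ) < α := lt_of_lt_of_le one_pos h1α
    have := hmono (Set.mem_Ioi.2 one_pos) (Set.mem_Ioi.2 hα) h1α
    rw [hφ1] at this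
    -- F w ≤ α^(-(p+2)) * F(α•w)
    have hpos : (0:ℝ) < α ^ (p + 2) := Real.rpow_pos_of_pos hα _
    have hinv : α ^ (p + 2) * α ^ (-(p + 2)) = 1 := by
      have he : p + 2 + -(p + 2) = 0 := by ring
      rw [← Real.rpow_add hα, he, Real.rpow_zero]
    have := mul_le_mul_of_nonneg_left this hpos.le
    calc α ^ (p + 2) * F w ≤ α ^ (p + 2) * (α ^ (-(p + 2)) * F (α • w)) := this
      _ = F (α • w) := by rw [← mul_assoc, hinv, one_mul]
  · intro hα hα1
    have := hmono (Set.mem_Ioi.2 hα) (Set.mem_Ioi.2 one_pos) hα1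
    rw [hφ1] at this
    have hpos : (0:ℝ) < α ^ (p + 2) := Real.rpow_pos_of_pos hα _
    have hinv : α ^ (p + 2) * α ^ (-(p + 2)) = 1 := by
      have he : p + 2 + -(p + 2) = 0 := by ring
      rw [← Real.rpow_add hα, he, Real.rpow_zero]
    have := mul_le_mul_of_nonneg_left this hpos.le
    calc F (α • w) = α ^ (p + 2) * (α ^ (-(p + 2)) * F (α • w)) := by
          rw [← mul_assoc, hinv, one_mul]
      _ ≤ α ^ (p + 2) * F w := this
end
end

section
/- Under the assumptions above, the gradient of F vanishes at the origin: ∇F(0) = 0. -/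
open RealInnerProductSpace

/-- Under condition (a), the gradient of `F` vanishes at the origin. -/
theorem stmt_3 (p : ℝ) (hp : 0 < p)
    (F : EuclideanSpace ℝ (Fin 4) → ℝ)
    (hF : ContDiff ℝ 2 F) (hF0 : F 0 = 0)
    (G : EuclideanSpace ℝ (Fin 4) → ℝ)
    (hG : ∀ w, G w = ⟪w, gradient F w⟫)
    (ha : ∀ w, ⟪w, gradient G w⟫ ≥ (p + 2) * G w) :
    gradient F 0 = 0 := by
  set v := gradient F 0 with hv
  -- gradient F is C¹
  have hgradF : ContDiff ℝ 1 (gradient F) := by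
    have h1 : ContDiff ℝ 1 (fderiv ℝ F) := hF.fderiv_right (by norm_num)
    exact (InnerProductSpace.toDual ℝ _).symm.contDiff.comp h1
  have hgradFd : Differentiable ℝ (gradient F) := hgradF.differentiable one_ne_zero
  -- G is differentiable
  have hGdiff : Differentiable ℝ G := by
    have hGe : G = fun w => ⟪w, gradient F w⟫ := funext hG
    rw [hGe]
    exact fun w => (differentiableAt_id).inner ℝ (hgradFd w)
  -- key differential inequality, pointwise
  have key : ∀ w, (p + 2) * G w ≤ fderiv ℝ G w w := by
    intro w
    have hd : HasGradientAt G (gradient G w) w := (hGdiff w).hasGradientAt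
    have hfd := hd.hasFDerivAt
    have h2 : fderiv ℝ G w w = ⟪gradient G w, w⟫ := by
      rw [hfd.fderiv]; rfl
    rw [h2, real_inner_comm]
    exact ha w
  -- derivative of t ↦ G (t • v)
  have hderiv : ∀ t : ℝ, HasDerivAt (fun s : ℝ => G (s • v)) (fderiv ℝ G (t • v) v) t := by
    intro t
    have h1 : HasDerivAt (fun s : ℝ => s • v) v t := by
      simpa using (hasDerivAt_id t).smul_const v
    exact ((hGdiff (t • v)).hasFDerivAt.comp_hasDerivAt t h1)
  -- monotonicity of ψ t = G(t•v) * t^(-(p+2)) on (0,∞)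
  set ψ : ℝ → ℝ := fun t => G (t • v) * t ^ (-(p + 2)) with hψ
  have hψderiv : ∀ t : ℝ, 0 < t → HasDerivAt ψ
      (fderiv ℝ G (t • v) v * t ^ (-(p + 2)) +
        G (t • v) * (-(p + 2) * t ^ (-(p + 2) - 1))) t := by
    intro t ht
    exact (hderiv t).mul (Real.hasDerivAt_rpow_const (Or.inl ht.ne'))
  have hmono : MonotoneOn ψ (Set.Ioi (0 : ℝ)) := by
    apply monotoneOn_of_deriv_nonneg (convex_Ioi 0)
    · intro t ht
      exact ((hψderiv t ht).continuousAt).continuousWithinAt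
    · intro t ht
      rw [interior_Ioi] at ht
      exact (hψderiv t ht).differentiableAt.differentiableWithinAt
    · intro t ht
      rw [interior_Ioi] at ht
      rw [(hψderiv t ht).deriv]
      have h1 : (p + 2) * G (t • v) ≤ t * fderiv ℝ G (t • v) v := by
        have := key (t • v)
        have h2 : fderiv ℝ G (t • v) (t • v) = t * fderiv ℝ G (t • v) v := by
          rw [(fderiv ℝ G (t • v)).map_smul]; simp
        linarith [h2 ▸ this]
      have hpow : (0:ℝ) < t ^ (-(p + 2) - 1) := Real.rpow_pos_of_pos ht _
      have hsplit : t ^ (-(p + 2)) = t * t ^ (-(p + 2) - 1) := by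
        have h6 := Real.rpow_one_add' (y := -(p + 2) - 1) ht.le (by intro h; nlinarith)
        rw [show (1:ℝ) + (-(p + 2) - 1) = -(p + 2) by ring] at h6
        exact h6
      rw [hsplit]
      have : fderiv ℝ G (t • v) v * (t * t ^ (-(p + 2) - 1)) +
          G (t • v) * (-(p + 2) * t ^ (-(p + 2) - 1)) =
          (t * fderiv ℝ G (t • v) v - (p + 2) * G (t • v)) * t ^ (-(p + 2) - 1) := by
        ring
      rw [this]
      exact mul_nonneg (by linarith) hpow.le
  -- hence G(t•v) ≤ G v * t^(p+2) for t ∈ (0,1]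
  have hbound : ∀ t : ℝ, t ∈ Set.Ioc (0:ℝ) 1 → ⟪v, gradient F (t • v)⟫ ≤ G v * t ^ (p + 1) := by
    intro t ⟨ht0, ht1⟩
    have h1 : ψ t ≤ ψ 1 := hmono (Set.mem_Ioi.2 ht0) (Set.mem_Ioi.2 one_pos) ht1
    have hψ1 : ψ 1 = G v := by simp [hψ]
    have hGt : G (t • v) = t * ⟪v, gradient F (t • v)⟫ := by
      rw [hG, real_inner_smul_left]
    have hpos : (0:ℝ) < t ^ (-(p + 2)) := Real.rpow_pos_of_pos ht0 _
    -- from ψ t ≤ G v : G(t•v) ≤ G v * t^(p+2)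
    have h2 : G (t • v) ≤ G v * t ^ (p + 2) := by
      have h3 : G (t • v) * t ^ (-(p + 2)) ≤ G v := hψ1 ▸ h1
      have h4 := mul_le_mul_of_nonneg_right h3 (Real.rpow_pos_of_pos ht0 (p + 2)).le
      rwa [mul_assoc, ← Real.rpow_add ht0, neg_add_cancel, Real.rpow_zero, mul_one] at h4
    have h5 : t * ⟪v, gradient F (t • v)⟫ ≤ G v * t ^ (p + 2) := hGt ▸ h2
    have hsplit : t ^ (p + 2) = t ^ (p + 1) * t := by
      rw [← Real.rpow_add_one ht0.ne']; ring_nf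
    rw [hsplit, ← mul_assoc] at h5
    have h6 : t * ⟪v, gradient F (t • v)⟫ ≤ t * (G v * t ^ (p + 1)) := by
      rw [mul_comm t (G v * t ^ (p + 1))]; exact h5
    exact le_of_mul_le_mul_left h6 ht0
  -- limits
  have hlim1 : Filter.Tendsto (fun t : ℝ => ⟪v, gradient F (t • v)⟫) (nhdsWithin 0 (Set.Ioi 0))
      (nhds (⟪v, v⟫)) := by
    have hc : Continuous fun t : ℝ => ⟪v, gradient F (t • v)⟫ :=
      continuous_const.inner (hgradF.continuous.comp (continuous_id.smul continuous_const))
    have := hc.continuousAt (x := (0:ℝ))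
    have h0 : ⟪v, gradient F ((0:ℝ) • v)⟫ = ⟪v, v⟫ := by simp [hv]
    exact (h0 ▸ this.continuousWithinAt.tendsto)
  have hlim2 : Filter.Tendsto (fun t : ℝ => G v * t ^ (p + 1)) (nhdsWithin 0 (Set.Ioi 0))
      (nhds 0) := by
    have h1 : Filter.Tendsto (fun t : ℝ => t ^ (p + 1)) (nhds 0) (nhds 0) := by
      have := (Real.continuousAt_rpow_const 0 (p + 1) (Or.inr (by linarith))).tendsto
      simpa [Real.zero_rpow (by linarith : p + 1 ≠ 0)] using this
    have h2 := (h1.const_mul (G v)).mono_left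
      (nhdsWithin_le_nhds (s := Set.Ioi (0:ℝ)))
    simpa using h2
  have hle : ⟪v, v⟫ ≤ (0:ℝ) := by
    refine le_of_tendsto_of_tendsto hlim1 hlim2 ?_
    filter_upwards [Ioc_mem_nhdsGT one_pos] with t ht
    exact hbound t ht
  exact real_inner_self_nonpos.mp hle
end

section
/- Under the assumptions above, let u, v : ℝ → ℝ be continuously differentiable and set W(x) = (u(x), u'(x), v(x), v'(x)) ∈ ℝ⁴. Let α > 0 and assume that the functions x ↦ G(W(x)) and x ↦ G(α W(x)) are Lebesgue integrable on ℝ. If α ≥ 1 then ∫_ℝ G(α W(x)) dx ≥ α^{p+2} ∫_ℝ G(W(x)) dx, and if 0 < α ≤ 1 then ∫_ℝ G(α W(x)) dx ≤ α^{p+2} ∫_ℝ G(W(x)) dx. -/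
open RealInnerProductSpace MeasureTheory

-- Key pointwise lemma
theorem key_lemma {E : Type*} [NormedAddCommGroup E] [InnerProductSpace ℝ E] [CompleteSpace E]
    (p : ℝ) (hp : 0 < p)
    (G : E → ℝ) (hGc : ContDiff ℝ 1 G)
    (ha : ∀ w, ⟪w, gradient G w⟫ ≥ (p + 2) * G w)
    (w : E) (α : ℝ) (hα : 0 < α) :
    (1 ≤ α → G (α • w) ≥ α ^ (p + 2) * G w) ∧
    (α ≤ 1 → G (α • w) ≤ α ^ (p + 2) * G w) := by
  set φ : ℝ → ℝ := fun t => t ^ (-(p + 2)) * G (t • w) with hφ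
  have hd : ∀ t : ℝ, 0 < t → HasDerivAt φ
      ((-(p + 2)) * t ^ (-(p + 2) - 1) * G (t • w)
        + t ^ (-(p + 2)) * fderiv ℝ G (t • w) w) t := by
    intro t ht
    have h1 : HasDerivAt (fun t : ℝ => t ^ (-(p + 2)))
        ((-(p + 2)) * t ^ (-(p + 2) - 1)) t :=
      Real.hasDerivAt_rpow_const (Or.inl ht.ne')
    have h2 : HasDerivAt (fun t : ℝ => G (t • w)) (fderiv ℝ G (t • w) w) t := by
      have hsm : HasDerivAt (fun t : ℝ => t • w) w t := by
        simpa using (hasDerivAt_id t).smul_const w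
      exact ((hGc.differentiable one_ne_zero (t • w)).hasFDerivAt).comp_hasDerivAt t hsm
    have := h1.mul h2
    rw [hφ]
    convert this using 1
    try ring
    all_goals rfl
  have hderiv_nonneg : ∀ t : ℝ, 0 < t → 0 ≤ deriv φ t := by
    intro t ht
    rw [(hd t ht).deriv]
    have hinner : fderiv ℝ G (t • w) w = ⟪gradient G (t • w), w⟫ :=
      (InnerProductSpace.toDual_symm_apply).symm
    have hkey := ha (t • w)
    rw [real_inner_smul_left, real_inner_comm] at hkey
    -- t * ⟪...⟫ ≥ (p+2) * G (t•w)
    have htw : t * fderiv ℝ G (t • w) w ≥ (p + 2) * G (t • w) := by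
      rw [hinner]; exact hkey
    have h3 : t ^ (-(p + 2) - 1) * (t * fderiv ℝ G (t • w) w - (p + 2) * G (t • w)) ≥ 0 :=
      mul_nonneg (Real.rpow_nonneg ht.le _) (by linarith)
    have ht1 : t ^ (-(p + 2) - 1) * t = t ^ (-(p + 2)) := by
      rw [← Real.rpow_add_one ht.ne']
      norm_num
    have h5 : t ^ (-(p + 2) - 1) * t * fderiv ℝ G (t • w) w
        = t ^ (-(p + 2)) * fderiv ℝ G (t • w) w := by rw [ht1]
    nlinarith [h3, h5]
  have hφ1 : φ 1 = G w := by simp [hφ]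
  have hφα : φ α = α ^ (-(p + 2)) * G (α • w) := rfl
  have hpow : α ^ (-(p + 2)) * α ^ (p + 2) = 1 := by
    rw [← Real.rpow_add hα, neg_add_cancel, Real.rpow_zero]
  have hpowpos : 0 < α ^ (p + 2) := Real.rpow_pos_of_pos hα _
  constructor
  · intro h1α
    have hm : MonotoneOn φ (Set.Ici (1 : ℝ)) := by
      apply monotoneOn_of_deriv_nonneg (convex_Ici 1)
      · intro t ht
        exact ((hd t (lt_of_lt_of_le one_pos ht)).continuousAt.continuousWithinAt)
      · intro t ht
        rw [interior_Ici] at ht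
        exact (hd t (lt_trans one_pos ht)).differentiableAt.differentiableWithinAt
      · intro t ht
        rw [interior_Ici] at ht
        exact hderiv_nonneg t (lt_trans one_pos ht)
    have := hm (Set.self_mem_Ici) (Set.mem_Ici.mpr h1α) h1α
    rw [hφ1, hφα] at this
    calc G (α • w) = α ^ (p + 2) * (α ^ (-(p + 2)) * G (α • w)) := by
          rw [← mul_assoc, mul_comm (α ^ (p + 2)), hpow, one_mul]
      _ ≥ α ^ (p + 2) * G w := by
          exact mul_le_mul_of_nonneg_left this hpowpos.le
  · intro hα1
    have hm : MonotoneOn φ (Set.Icc α 1) := by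
      apply monotoneOn_of_deriv_nonneg (convex_Icc α 1)
      · intro t ht
        exact ((hd t (lt_of_lt_of_le hα ht.1)).continuousAt.continuousWithinAt)
      · intro t ht
        rw [interior_Icc] at ht
        exact (hd t (lt_trans hα ht.1)).differentiableAt.differentiableWithinAt
      · intro t ht
        rw [interior_Icc] at ht
        exact hderiv_nonneg t (lt_trans hα ht.1)
    have := hm (Set.mem_Icc.mpr ⟨le_rfl, hα1⟩) (Set.mem_Icc.mpr ⟨hα1, le_rfl⟩) hα1
    rw [hφ1, hφα] at this
    calc G (α • w) = α ^ (p + 2) * (α ^ (-(p + 2)) * G (α • w)) := by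
          rw [← mul_assoc, mul_comm (α ^ (p + 2)), hpow, one_mul]
      _ ≤ α ^ (p + 2) * G w := mul_le_mul_of_nonneg_left this hpowpos.le

/-- Lemma (Esfahani–Levandosky type), item (iv): under condition (a), for
`W(x) = (u(x), u'(x), v(x), v'(x))`, the functional `N(w) = ∫ G(W)` satisfies
`N(αW) ≥ α^(p+2) N(W)` for `α ≥ 1` and `N(αW) ≤ α^(p+2) N(W)` for `0 < α ≤ 1`. -/
theorem stmt_5 (p : ℝ) (hp : 0 < p)
    (F : EuclideanSpace ℝ (Fin 4) → ℝ)
    (hF : ContDiff ℝ 2 F) (hF0 : F 0 = 0)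
    (G : EuclideanSpace ℝ (Fin 4) → ℝ)
    (hG : ∀ w, G w = ⟪w, gradient F w⟫)
    (ha : ∀ w, ⟪w, gradient G w⟫ ≥ (p + 2) * G w)
    (u v : ℝ → ℝ) (hu : ContDiff ℝ 1 u) (hv : ContDiff ℝ 1 v)
    (W : ℝ → EuclideanSpace ℝ (Fin 4))
    (hW : ∀ x, W x = (WithLp.equiv 2 (Fin 4 → ℝ)).symm ![u x, deriv u x, v x, deriv v x])
    (α : ℝ) (hα : 0 < α)
    (hint : Integrable (fun x => G (W x)))
    (hint' : Integrable (fun x => G (α • W x))) :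
    (1 ≤ α → ∫ x : ℝ, G (α • W x) ≥ α ^ (p + 2) * ∫ x : ℝ, G (W x)) ∧
    (α ≤ 1 → ∫ x : ℝ, G (α • W x) ≤ α ^ (p + 2) * ∫ x : ℝ, G (W x)) := by
  have hGc : ContDiff ℝ 1 G := by
    have hgrad : ContDiff ℝ 1 (fun w => gradient F w) := by
      have : ContDiff ℝ 1 (fderiv ℝ F) := hF.fderiv_right (by norm_num)
      exact ((InnerProductSpace.toDual ℝ
        (EuclideanSpace ℝ (Fin 4))).symm.toLinearIsometry.toContinuousLinearMap.contDiff).comp this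
    have hGeq : G = fun w => ⟪w, gradient F w⟫ := funext hG
    rw [hGeq]
    exact ContDiff.inner ℝ contDiff_id hgrad
  have hkey := fun x => key_lemma p hp G hGc ha (W x) α hα
  constructor
  · intro h1α
    have hpt : ∀ x, α ^ (p + 2) * G (W x) ≤ G (α • W x) := fun x => (hkey x).1 h1α
    have := integral_mono (hint.const_mul _) hint' hpt
    calc α ^ (p + 2) * ∫ x : ℝ, G (W x) = ∫ x : ℝ, α ^ (p + 2) * G (W x) := by
          rw [integral_const_mul]
      _ ≤ ∫ x : ℝ, G (α • W x) := this
  · intro hα1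
    have hpt : ∀ x, G (α • W x) ≤ α ^ (p + 2) * G (W x) := fun x => (hkey x).2 hα1
    have := integral_mono hint' (hint.const_mul _) hpt
    calc (∫ x : ℝ, G (α • W x)) ≤ ∫ x : ℝ, α ^ (p + 2) * G (W x) := this
      _ = α ^ (p + 2) * ∫ x : ℝ, G (W x) := integral_const_mul _ _
end

section
/- Under the assumptions above, let u, v : ℝ → ℝ be continuously differentiable and set W(x) = (u(x), u'(x), v(x), v'(x)) ∈ ℝ⁴. Assume that the functions x ↦ F(W(x)) and x ↦ G(W(x)) are Lebesgue integrable on ℝ. Then ∫_ℝ G(W(x)) dx ≥ (p+2) ∫_ℝ F(W(x)) dx; that is, N(u,v) ≥ (p+2) K(u,v), where K(u,v) = ∫_ℝ F(u, u', v, v') dx and N(u,v) = ∫_ℝ G(u, u', v, v') dx. -/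
open RealInnerProductSpace MeasureTheory

private lemma key_ineq (p : ℝ)
    (F : EuclideanSpace ℝ (Fin 4) → ℝ)
    (hF : ContDiff ℝ 2 F) (hF0 : F 0 = 0)
    (G : EuclideanSpace ℝ (Fin 4) → ℝ)
    (hG : ∀ w, G w = ⟪w, gradient F w⟫)
    (ha : ∀ w, ⟪w, gradient G w⟫ ≥ (p + 2) * G w)
    (w : EuclideanSpace ℝ (Fin 4)) : (p + 2) * F w ≤ G w := by
  have hFd : Differentiable ℝ F := hF.differentiable (by norm_num)
  have hgradF : ContDiff ℝ 1 (fun x => gradient F x) := by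
    have h1 : ContDiff ℝ 1 (fderiv ℝ F) := hF.fderiv_right (by norm_num)
    exact (InnerProductSpace.toDual ℝ (EuclideanSpace ℝ (Fin 4))).symm.contDiff.comp h1
  have hGc : ContDiff ℝ 1 G := by
    have h2 : ContDiff ℝ 1 fun x : EuclideanSpace ℝ (Fin 4) => ⟪x, gradient F x⟫ :=
      contDiff_id.inner ℝ hgradF
    have : G = fun x => ⟪x, gradient F x⟫ := funext hG
    rw [this]; exact h2
  have hGd : Differentiable ℝ G := hGc.differentiable (by norm_num)
  have hline : ∀ t : ℝ, HasDerivAt (fun s : ℝ => s • w) w t := fun t => by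
    simpa using (hasDerivAt_id t).smul_const w
  have hf : ∀ t : ℝ, HasDerivAt (fun s => F (s • w)) ⟪w, gradient F (t • w)⟫ t := by
    intro t
    have hc := ((hFd (t • w)).hasGradientAt.hasFDerivAt).comp_hasDerivAt t (hline t)
    have he : (InnerProductSpace.toDual ℝ (EuclideanSpace ℝ (Fin 4)) (gradient F (t • w))) w
        = ⟪w, gradient F (t • w)⟫ := by
      rw [InnerProductSpace.toDual_apply_apply, real_inner_comm]
    rw [he] at hc
    exact hc
  have hg : ∀ t : ℝ, HasDerivAt (fun s => G (s • w)) ⟪w, gradient G (t • w)⟫ t := by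
    intro t
    have hc := ((hGd (t • w)).hasGradientAt.hasFDerivAt).comp_hasDerivAt t (hline t)
    have he : (InnerProductSpace.toDual ℝ (EuclideanSpace ℝ (Fin 4)) (gradient G (t • w))) w
        = ⟪w, gradient G (t • w)⟫ := by
      rw [InnerProductSpace.toDual_apply_apply, real_inner_comm]
    rw [he] at hc
    exact hc
  set h : ℝ → ℝ := fun t => G (t • w) - (p + 2) * F (t • w) with hh_def
  have hh : ∀ t, HasDerivAt h
      (⟪w, gradient G (t • w)⟫ - (p + 2) * ⟪w, gradient F (t • w)⟫) t :=
    fun t => (hg t).sub ((hf t).const_mul _)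
  have hmono : MonotoneOn h (Set.Icc (0:ℝ) 1) := by
    apply monotoneOn_of_deriv_nonneg (convex_Icc 0 1)
    · have hd : Differentiable ℝ h := fun t => (hh t).differentiableAt
      exact hd.continuous.continuousOn
    · exact fun t _ => ((hh t).differentiableAt).differentiableWithinAt
    · intro t ht
      rw [interior_Icc] at ht
      rw [(hh t).deriv]
      have hkey := ha (t • w)
      have h1 : ⟪t • w, gradient G (t • w)⟫ = t * ⟪w, gradient G (t • w)⟫ :=
        real_inner_smul_left _ _ _
      have h2 : G (t • w) = t * ⟪w, gradient F (t • w)⟫ := by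
        rw [hG, real_inner_smul_left]
      rw [h1, h2] at hkey
      have ht0 : 0 < t := ht.1
      nlinarith [hkey, ht0]
  have h0 : h 0 = 0 := by
    simp [hh_def, hG, hF0, inner_zero_left]
  have h01 : h 0 ≤ h 1 :=
    hmono (Set.left_mem_Icc.mpr zero_le_one) (Set.right_mem_Icc.mpr zero_le_one) zero_le_one
  have h1v : h 1 = G w - (p + 2) * F w := by simp [hh_def]
  linarith [h01, h0.symm ▸ h01]

/-- Lemma (Esfahani–Levandosky type), item (v): under condition (a),
`N(u,v) ≥ (p+2) K(u,v)`, i.e. `∫ G(W) ≥ (p+2) ∫ F(W)` where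
`W(x) = (u(x), u'(x), v(x), v'(x))`. -/
theorem stmt_6 (p : ℝ) (hp : 0 < p)
    (F : EuclideanSpace ℝ (Fin 4) → ℝ)
    (hF : ContDiff ℝ 2 F) (hF0 : F 0 = 0)
    (G : EuclideanSpace ℝ (Fin 4) → ℝ)
    (hG : ∀ w, G w = ⟪w, gradient F w⟫)
    (ha : ∀ w, ⟪w, gradient G w⟫ ≥ (p + 2) * G w)
    (u v : ℝ → ℝ) (hu : ContDiff ℝ 1 u) (hv : ContDiff ℝ 1 v)
    (W : ℝ → EuclideanSpace ℝ (Fin 4))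
    (hW : ∀ x, W x = (WithLp.equiv 2 (Fin 4 → ℝ)).symm ![u x, deriv u x, v x, deriv v x])
    (hK : Integrable (fun x => F (W x)))
    (hN : Integrable (fun x => G (W x))) :
    ∫ x : ℝ, G (W x) ≥ (p + 2) * ∫ x : ℝ, F (W x) := by
  have hpt : ∀ x : ℝ, (p + 2) * F (W x) ≤ G (W x) :=
    fun x => key_ineq p F hF hF0 G hG ha (W x)
  rw [ge_iff_le, ← integral_const_mul]
  exact integral_mono (hK.const_mul _) hN hpt
end

section
/- Let a, c < 0, a₂, c₂ > 0, b > 0, b₂ > 0 and ω ∈ ℝ satisfy ω² ≤ 1, b²ω² ≤ ac, and b₂²ω² ≤ a₂c₂. Then for all real numbers ψ₀, ψ₁, ψ₂, v₀, v₁, v₂ one has ρ(ψ₀, ψ₁, ψ₂, v₀, v₁, v₂) ≥ 0. -/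
lemma aux_block (p q r x y : ℝ) (hp : 0 < p) (hr : r ^ 2 ≤ p * q) :
    p * x ^ 2 + q * y ^ 2 - 2 * r * (x * y) ≥ 0 := by
  nlinarith [sq_nonneg (p * x - r * y), sq_nonneg y, mul_pos hp hp]

/-- Nonnegativity of the quadratic density `ρ` when `ω² ≤ 1`, `b²ω² ≤ ac` and
`b₂²ω² ≤ a₂c₂`. -/
theorem stmt_7 (a c a₂ c₂ b b₂ ω : ℝ)
    (ha : a < 0) (hc : c < 0) (ha₂ : 0 < a₂) (hc₂ : 0 < c₂)
    (hb : 0 < b) (hb₂ : 0 < b₂)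
    (hω1 : ω ^ 2 ≤ 1) (hω2 : b ^ 2 * ω ^ 2 ≤ a * c) (hω3 : b₂ ^ 2 * ω ^ 2 ≤ a₂ * c₂)
    (ψ₀ ψ₁ ψ₂ v₀ v₁ v₂ : ℝ) :
    ψ₀ ^ 2 - c * ψ₁ ^ 2 + c₂ * ψ₂ ^ 2 + v₀ ^ 2 - a * v₁ ^ 2 + a₂ * v₂ ^ 2
      - 2 * ω * (ψ₀ * v₀ + b * ψ₁ * v₁ + b₂ * ψ₂ * v₂) ≥ 0 := by
  have h1 : (1:ℝ) * ψ₀ ^ 2 + 1 * v₀ ^ 2 - 2 * ω * (ψ₀ * v₀) ≥ 0 :=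
    aux_block 1 1 ω ψ₀ v₀ one_pos (by linarith)
  have h2 : (-c) * ψ₁ ^ 2 + (-a) * v₁ ^ 2 - 2 * (ω * b) * (ψ₁ * v₁) ≥ 0 :=
    aux_block (-c) (-a) (ω * b) ψ₁ v₁ (by linarith) (by nlinarith)
  have h3 : c₂ * ψ₂ ^ 2 + a₂ * v₂ ^ 2 - 2 * (ω * b₂) * (ψ₂ * v₂) ≥ 0 :=
    aux_block c₂ a₂ (ω * b₂) ψ₂ v₂ hc₂ (by nlinarith)
  linarith
end

section
/- Let a, c < 0, a₂, c₂ > 0, b > 0, b₂ > 0 and ω ∈ ℝ satisfy 0 < |ω| < min{1, −a/b, −c/b, a₂/b₂, c₂/b₂}. Set M₁ = min{1 − |ω|, −c − b|ω|, −a − b|ω|, a₂ − b₂|ω|, c₂ − b₂|ω|}. Then M₁ > 0 and for all real numbers ψ₀, ψ₁, ψ₂, v₀, v₁, v₂ one has M₁ · σ(ψ₀, ψ₁, ψ₂, v₀, v₁, v₂) ≤ ρ(ψ₀, ψ₁, ψ₂, v₀, v₁, v₂). -/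
/-- Lower bound `M₁ σ ≤ ρ` for the quadratic density, with
`M₁ = min{1 − |ω|, −c − b|ω|, −a − b|ω|, a₂ − b₂|ω|, c₂ − b₂|ω|} > 0`, when
`0 < |ω| < min{1, −a/b, −c/b, a₂/b₂, c₂/b₂}`. -/
theorem stmt_8 (a c a₂ c₂ b b₂ ω : ℝ)
    (ha : a < 0) (hc : c < 0) (ha₂ : 0 < a₂) (hc₂ : 0 < c₂)
    (hb : 0 < b) (hb₂ : 0 < b₂)
    (hω0 : 0 < |ω|)
    (hω : |ω| < min 1 (min (-a / b) (min (-c / b) (min (a₂ / b₂) (c₂ / b₂)))))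
    (M₁ : ℝ)
    (hM₁ : M₁ = min (1 - |ω|) (min (-c - b * |ω|)
      (min (-a - b * |ω|) (min (a₂ - b₂ * |ω|) (c₂ - b₂ * |ω|))))) :
    0 < M₁ ∧ ∀ ψ₀ ψ₁ ψ₂ v₀ v₁ v₂ : ℝ,
      M₁ * (ψ₀ ^ 2 + ψ₁ ^ 2 + ψ₂ ^ 2 + v₀ ^ 2 + v₁ ^ 2 + v₂ ^ 2) ≤
        ψ₀ ^ 2 - c * ψ₁ ^ 2 + c₂ * ψ₂ ^ 2 + v₀ ^ 2 - a * v₁ ^ 2 + a₂ * v₂ ^ 2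
          - 2 * ω * (ψ₀ * v₀ + b * ψ₁ * v₁ + b₂ * ψ₂ * v₂) := by
  obtain ⟨h1, h2⟩ := lt_min_iff.mp hω
  obtain ⟨h3, h4⟩ := lt_min_iff.mp h2
  obtain ⟨h5, h6⟩ := lt_min_iff.mp h4
  obtain ⟨h7, h8⟩ := lt_min_iff.mp h6
  have hba : b * |ω| < -a := mul_comm |ω| b ▸ (lt_div_iff₀ hb).mp h3
  have hbc : b * |ω| < -c := mul_comm |ω| b ▸ (lt_div_iff₀ hb).mp h5
  have hba₂ : b₂ * |ω| < a₂ := mul_comm |ω| b₂ ▸ (lt_div_iff₀ hb₂).mp h7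
  have hbc₂ : b₂ * |ω| < c₂ := mul_comm |ω| b₂ ▸ (lt_div_iff₀ hb₂).mp h8
  have hpos : 0 < M₁ := by
    rw [hM₁]
    simp only [lt_min_iff]
    constructor; · linarith
    constructor; · linarith
    constructor; · linarith
    constructor; · linarith
    linarith
  refine ⟨hpos, fun ψ₀ ψ₁ ψ₂ v₀ v₁ v₂ => ?_⟩
  have key : ∀ ψ v : ℝ, 2 * ω * (ψ * v) ≤ |ω| * (ψ ^ 2 + v ^ 2) := by
    intro ψ v
    nlinarith [mul_nonneg (sub_nonneg.mpr (neg_abs_le ω)) (sq_nonneg (ψ - v)),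
      mul_nonneg (sub_nonneg.mpr (le_abs_self ω)) (sq_nonneg (ψ + v))]
  have k0 := key ψ₀ v₀
  have k1 := key ψ₁ v₁
  have k2 := key ψ₂ v₂
  have m1 : M₁ ≤ 1 - |ω| := hM₁ ▸ min_le_left _ _
  have m2 : M₁ ≤ -c - b * |ω| := hM₁ ▸ le_trans (min_le_right _ _) (min_le_left _ _)
  have m3 : M₁ ≤ -a - b * |ω| := hM₁ ▸ le_trans (min_le_right _ _)
    (le_trans (min_le_right _ _) (min_le_left _ _))
  have m4 : M₁ ≤ a₂ - b₂ * |ω| := hM₁ ▸ le_trans (min_le_right _ _)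
    (le_trans (min_le_right _ _) (le_trans (min_le_right _ _) (min_le_left _ _)))
  have m5 : M₁ ≤ c₂ - b₂ * |ω| := hM₁ ▸ le_trans (min_le_right _ _)
    (le_trans (min_le_right _ _) (le_trans (min_le_right _ _) (min_le_right _ _)))
  nlinarith [sq_nonneg ψ₀, sq_nonneg ψ₁, sq_nonneg ψ₂, sq_nonneg v₀, sq_nonneg v₁,
    sq_nonneg v₂, mul_le_mul_of_nonneg_left k1 hb.le, mul_le_mul_of_nonneg_left k2 hb₂.le]
end

section
/- Let a, c < 0, a₂, c₂ > 0, b > 0, b₂ > 0 and ω ∈ ℝ satisfy 0 < |ω| < min{1, −a/b, −c/b, a₂/b₂, c₂/b₂}. Set M₁ = min{1 − |ω|, −c − b|ω|, −a − b|ω|, a₂ − b₂|ω|, c₂ − b₂|ω|} and M₂ = max{1 + |ω|, |c| + b|ω|, |a| + b|ω|, a₂ + b₂|ω|, c₂ + b₂|ω|}. Let ψ, v : ℝ → ℝ be twice continuously differentiable functions such that ψ, ψ', ψ'', v, v', v'' all belong to L²(ℝ) (i.e., each is square-integrable with respect to Lebesgue measure). Then the integrand of I_ω is integrable and M₁ ‖(ψ,v)‖²_X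 ≤ I_ω(ψ, v) ≤ M₂ ‖(ψ,v)‖²_X, where I_ω(ψ,v) = ∫_ℝ [ψ² − c(ψ')² + c₂(ψ'')² + v² − a(v')² + a₂(v'')² − 2ω(ψv + bψ'v' + b₂ψ''v'')] dx and ‖(ψ,v)‖²_X = ∫_ℝ [ψ² + (ψ')² + (ψ'')² + v² + (v')² + (v'')²] dx. -/
open MeasureTheory

lemma cross_abs (ω p q : ℝ) : |2 * ω * p * q| ≤ |ω| * (p ^ 2 + q ^ 2) := by
  have h1 : |2 * ω * p * q| = |ω| * (2 * |p| * |q|) := by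
    rw [abs_mul, abs_mul, abs_mul]
    simp [abs_two]; ring
  rw [h1]
  have h2 : 2 * |p| * |q| ≤ p ^ 2 + q ^ 2 := by
    nlinarith [sq_nonneg (|p| - |q|), sq_abs p, sq_abs q]
  nlinarith [abs_nonneg ω]

lemma block_low (α β γ ω m p q : ℝ) (hγ : 0 ≤ γ) (h1 : m ≤ α - γ * |ω|)
    (h2 : m ≤ β - γ * |ω|) :
    m * (p ^ 2 + q ^ 2) ≤ α * p ^ 2 + β * q ^ 2 - 2 * ω * (γ * p * q) := by
  have := cross_abs ω p q
  have hab : 2 * ω * p * q ≤ |ω| * (p ^ 2 + q ^ 2) := le_of_abs_le this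
  nlinarith [mul_le_mul_of_nonneg_right h1 (sq_nonneg p),
    mul_le_mul_of_nonneg_right h2 (sq_nonneg q),
    mul_le_mul_of_nonneg_left hab hγ]

lemma block_high (α β γ ω M p q : ℝ) (hγ : 0 ≤ γ) (h1 : α + γ * |ω| ≤ M)
    (h2 : β + γ * |ω| ≤ M) :
    α * p ^ 2 + β * q ^ 2 - 2 * ω * (γ * p * q) ≤ M * (p ^ 2 + q ^ 2) := by
  have := cross_abs ω p q
  have hab' : -(|ω| * (p ^ 2 + q ^ 2)) ≤ 2 * ω * p * q := neg_le_of_abs_le this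
  nlinarith [mul_le_mul_of_nonneg_right h1 (sq_nonneg p),
    mul_le_mul_of_nonneg_right h2 (sq_nonneg q),
    mul_le_mul_of_nonneg_left hab' hγ]

/-- Lemma (equivalence of `I_ω` with the squared `X = H² × H²` norm):
for `0 < |ω| < min{1, −a/b, −c/b, a₂/b₂, c₂/b₂}`, the integrand of `I_ω` is
integrable and `M₁‖(ψ,v)‖²_X ≤ I_ω(ψ,v) ≤ M₂‖(ψ,v)‖²_X`. -/
theorem stmt_10 (a c a₂ c₂ b b₂ ω : ℝ)
    (ha : a < 0) (hc : c < 0) (ha₂ : 0 < a₂) (hc₂ : 0 < c₂)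
    (hb : 0 < b) (hb₂ : 0 < b₂)
    (hω0 : 0 < |ω|)
    (hω : |ω| < min 1 (min (-a / b) (min (-c / b) (min (a₂ / b₂) (c₂ / b₂)))))
    (M₁ M₂ : ℝ)
    (hM₁ : M₁ = min (1 - |ω|) (min (-c - b * |ω|)
      (min (-a - b * |ω|) (min (a₂ - b₂ * |ω|) (c₂ - b₂ * |ω|)))))
    (hM₂ : M₂ = max (1 + |ω|) (max (|c| + b * |ω|)
      (max (|a| + b * |ω|) (max (a₂ + b₂ * |ω|) (c₂ + b₂ * |ω|)))))
    (ψ v : ℝ → ℝ) (hψ : ContDiff ℝ 2 ψ) (hv : ContDiff ℝ 2 v)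
    (hψ0 : Integrable (fun x => ψ x ^ 2))
    (hψ1 : Integrable (fun x => deriv ψ x ^ 2))
    (hψ2 : Integrable (fun x => iteratedDeriv 2 ψ x ^ 2))
    (hv0 : Integrable (fun x => v x ^ 2))
    (hv1 : Integrable (fun x => deriv v x ^ 2))
    (hv2 : Integrable (fun x => iteratedDeriv 2 v x ^ 2)) :
    Integrable (fun x => ψ x ^ 2 - c * deriv ψ x ^ 2 + c₂ * iteratedDeriv 2 ψ x ^ 2
        + v x ^ 2 - a * deriv v x ^ 2 + a₂ * iteratedDeriv 2 v x ^ 2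
        - 2 * ω * (ψ x * v x + b * deriv ψ x * deriv v x
          + b₂ * iteratedDeriv 2 ψ x * iteratedDeriv 2 v x)) ∧
    M₁ * ∫ x : ℝ, (ψ x ^ 2 + deriv ψ x ^ 2 + iteratedDeriv 2 ψ x ^ 2
        + v x ^ 2 + deriv v x ^ 2 + iteratedDeriv 2 v x ^ 2) ≤
      (∫ x : ℝ, (ψ x ^ 2 - c * deriv ψ x ^ 2 + c₂ * iteratedDeriv 2 ψ x ^ 2
        + v x ^ 2 - a * deriv v x ^ 2 + a₂ * iteratedDeriv 2 v x ^ 2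
        - 2 * ω * (ψ x * v x + b * deriv ψ x * deriv v x
          + b₂ * iteratedDeriv 2 ψ x * iteratedDeriv 2 v x))) ∧
    (∫ x : ℝ, (ψ x ^ 2 - c * deriv ψ x ^ 2 + c₂ * iteratedDeriv 2 ψ x ^ 2
        + v x ^ 2 - a * deriv v x ^ 2 + a₂ * iteratedDeriv 2 v x ^ 2
        - 2 * ω * (ψ x * v x + b * deriv ψ x * deriv v x
          + b₂ * iteratedDeriv 2 ψ x * iteratedDeriv 2 v x))) ≤
      M₂ * ∫ x : ℝ, (ψ x ^ 2 + deriv ψ x ^ 2 + iteratedDeriv 2 ψ x ^ 2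
        + v x ^ 2 + deriv v x ^ 2 + iteratedDeriv 2 v x ^ 2) := by
  
  set F : ℝ → ℝ := fun x => ψ x ^ 2 - c * deriv ψ x ^ 2 + c₂ * iteratedDeriv 2 ψ x ^ 2
        + v x ^ 2 - a * deriv v x ^ 2 + a₂ * iteratedDeriv 2 v x ^ 2
        - 2 * ω * (ψ x * v x + b * deriv ψ x * deriv v x
          + b₂ * iteratedDeriv 2 ψ x * iteratedDeriv 2 v x) with hF
  set G : ℝ → ℝ := fun x => ψ x ^ 2 + deriv ψ x ^ 2 + iteratedDeriv 2 ψ x ^ 2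
        + v x ^ 2 + deriv v x ^ 2 + iteratedDeriv 2 v x ^ 2 with hG
  -- bounds on M₁ and M₂
  have m11 : M₁ ≤ 1 - 1 * |ω| := by rw [hM₁, one_mul]; exact min_le_left _ _
  have m12 : M₁ ≤ -c - b * |ω| := by
    rw [hM₁]; exact (min_le_right _ _).trans (min_le_left _ _)
  have m13 : M₁ ≤ -a - b * |ω| := by
    rw [hM₁]; exact (min_le_right _ _).trans ((min_le_right _ _).trans (min_le_left _ _))
  have m14 : M₁ ≤ a₂ - b₂ * |ω| := by
    rw [hM₁]
    exact (min_le_right _ _).trans ((min_le_right _ _).trans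
      ((min_le_right _ _).trans (min_le_left _ _)))
  have m15 : M₁ ≤ c₂ - b₂ * |ω| := by
    rw [hM₁]
    exact (min_le_right _ _).trans ((min_le_right _ _).trans
      ((min_le_right _ _).trans (min_le_right _ _)))
  have habsc : |c| = -c := abs_of_neg hc
  have habsa : |a| = -a := abs_of_neg ha
  have m21 : 1 + 1 * |ω| ≤ M₂ := by rw [hM₂, one_mul]; exact le_max_left _ _
  have m22 : -c + b * |ω| ≤ M₂ := by
    rw [hM₂, ← habsc]; exact (le_max_left _ _).trans (le_max_right _ _)
  have m23 : -a + b * |ω| ≤ M₂ := by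
    rw [hM₂, ← habsa]
    exact ((le_max_left _ _).trans (le_max_right _ _)).trans (le_max_right _ _)
  have m24 : a₂ + b₂ * |ω| ≤ M₂ := by
    rw [hM₂]
    exact (((le_max_left _ _).trans (le_max_right _ _)).trans
      (le_max_right _ _)).trans (le_max_right _ _)
  have m25 : c₂ + b₂ * |ω| ≤ M₂ := by
    rw [hM₂]
    exact (((le_max_right _ _).trans (le_max_right _ _)).trans
      (le_max_right _ _)).trans (le_max_right _ _)
  -- pointwise bounds
  have key_low : ∀ x, M₁ * G x ≤ F x := by
    intro x
    have B1 := block_low 1 1 1 ω M₁ (ψ x) (v x) zero_le_one m11 m11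
    have B2 := block_low (-c) (-a) b ω M₁ (deriv ψ x) (deriv v x) hb.le m12 m13
    have B3 := block_low c₂ a₂ b₂ ω M₁ (iteratedDeriv 2 ψ x) (iteratedDeriv 2 v x)
      hb₂.le m15 m14
    have e1 : F x = (1 * ψ x ^ 2 + 1 * v x ^ 2 - 2 * ω * (1 * ψ x * v x))
        + ((-c) * deriv ψ x ^ 2 + (-a) * deriv v x ^ 2
          - 2 * ω * (b * deriv ψ x * deriv v x))
        + (c₂ * iteratedDeriv 2 ψ x ^ 2 + a₂ * iteratedDeriv 2 v x ^ 2
          - 2 * ω * (b₂ * iteratedDeriv 2 ψ x * iteratedDeriv 2 v x)) := by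
      simp only [hF]; ring
    have e2 : M₁ * G x = M₁ * (ψ x ^ 2 + v x ^ 2)
        + M₁ * (deriv ψ x ^ 2 + deriv v x ^ 2)
        + M₁ * (iteratedDeriv 2 ψ x ^ 2 + iteratedDeriv 2 v x ^ 2) := by
      simp only [hG]; ring
    rw [e1, e2]
    exact add_le_add (add_le_add B1 B2) B3
  have key_high : ∀ x, F x ≤ M₂ * G x := by
    intro x
    have B1 := block_high 1 1 1 ω M₂ (ψ x) (v x) zero_le_one m21 m21
    have B2 := block_high (-c) (-a) b ω M₂ (deriv ψ x) (deriv v x) hb.le m22 m23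
    have B3 := block_high c₂ a₂ b₂ ω M₂ (iteratedDeriv 2 ψ x) (iteratedDeriv 2 v x)
      hb₂.le m25 m24
    have e1 : F x = (1 * ψ x ^ 2 + 1 * v x ^ 2 - 2 * ω * (1 * ψ x * v x))
        + ((-c) * deriv ψ x ^ 2 + (-a) * deriv v x ^ 2
          - 2 * ω * (b * deriv ψ x * deriv v x))
        + (c₂ * iteratedDeriv 2 ψ x ^ 2 + a₂ * iteratedDeriv 2 v x ^ 2
          - 2 * ω * (b₂ * iteratedDeriv 2 ψ x * iteratedDeriv 2 v x)) := by
      simp only [hF]; ring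
    have e2 : M₂ * G x = M₂ * (ψ x ^ 2 + v x ^ 2)
        + M₂ * (deriv ψ x ^ 2 + deriv v x ^ 2)
        + M₂ * (iteratedDeriv 2 ψ x ^ 2 + iteratedDeriv 2 v x ^ 2) := by
      simp only [hG]; ring
    rw [e1, e2]
    exact add_le_add (add_le_add B1 B2) B3
  -- integrability
  have hGint : Integrable G := by
    simp only [hG]
    exact ((((hψ0.add hψ1).add hψ2).add hv0).add hv1).add hv2
  have cψ0 : Continuous ψ := hψ.continuous
  have cψ1 : Continuous (deriv ψ) := hψ.continuous_deriv one_le_two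
  have cψ2 : Continuous (iteratedDeriv 2 ψ) := hψ.continuous_iteratedDeriv 2 le_rfl
  have cv0 : Continuous v := hv.continuous
  have cv1 : Continuous (deriv v) := hv.continuous_deriv one_le_two
  have cv2 : Continuous (iteratedDeriv 2 v) := hv.continuous_iteratedDeriv 2 le_rfl
  have cF : Continuous F := by
    simp only [hF]; fun_prop
  have hGnn : ∀ x, 0 ≤ G x := by
    intro x; simp only [hG]; positivity
  have hFint : Integrable F := by
    refine (hGint.const_mul (|M₁| + |M₂|)).mono' cF.aestronglyMeasurable ?_
    filter_upwards with x
    rw [Real.norm_eq_abs, abs_le]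
    constructor
    · have h1 := key_low x
      nlinarith [neg_abs_le M₁, abs_nonneg M₂, hGnn x]
    · have h2 := key_high x
      nlinarith [le_abs_self M₂, abs_nonneg M₁, hGnn x]
  refine ⟨hFint, ?_, ?_⟩
  · calc M₁ * ∫ x, G x = ∫ x, M₁ * G x := (MeasureTheory.integral_const_mul M₁ G).symm
    _ ≤ ∫ x, F x := integral_mono (hGint.const_mul M₁) hFint key_low
  · calc (∫ x, F x) ≤ ∫ x, M₂ * G x := integral_mono hFint (hGint.const_mul M₂) key_high
    _ = M₂ * ∫ x, G x := MeasureTheory.integral_const_mul M₂ G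
end

section
/- Let 0 < p < q be real numbers and define F : ℝ⁴ → ℝ by F(x₁, x₂, x₃, x₄) = |x₁|^{q+2}/(q+2) + |x₁|^{p+2}/(p+2) + |x₃|^{q+2}/(q+2) + |x₃|^{p+2}/(p+2). Then F satisfies condition (b) with exponents q₁ = p and q₂ = q: there exists a constant C > 0 such that ‖D²F(w)‖ ≤ C(‖w‖^{p} + ‖w‖^{q}) for all w ∈ ℝ⁴, where D²F(w) is the second Fréchet derivative of F at w, ‖D²F(w)‖ its operator norm, and ‖w‖ the Euclidean norm. -/
open Real Filter

set_option maxHeartbeats 1000000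
set_option synthInstance.maxHeartbeats 400000

private lemma hasDerivAt_abs_rpow_mul {r : ℝ} (hr : 0 < r) (t : ℝ) :
    HasDerivAt (fun s : ℝ => |s| ^ r * s) ((r + 1) * |t| ^ r) t := by
  rcases eq_or_ne t 0 with rfl | ht
  · rw [abs_zero, Real.zero_rpow hr.ne', mul_zero]
    rw [hasDerivAt_iff_tendsto_slope]
    have h1 : Tendsto (fun s : ℝ => |s| ^ r) (nhdsWithin (0:ℝ) {(0:ℝ)}ᶜ) (nhds 0) := by
      have hc : ContinuousAt (fun s : ℝ => |s| ^ r) 0 :=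
        (Real.continuousAt_rpow_const |0| r (Or.inr hr.le)).comp continuous_abs.continuousAt
      have h0 : |(0:ℝ)| ^ r = 0 := by rw [abs_zero, Real.zero_rpow hr.ne']
      have := hc.tendsto
      rw [h0] at this
      exact this.mono_left nhdsWithin_le_nhds
    refine h1.congr' ?_
    filter_upwards [self_mem_nhdsWithin] with s hs
    have hs' : (s : ℝ) ≠ 0 := hs
    simp only [slope_def_field, abs_zero, Real.zero_rpow hr.ne', zero_mul, sub_zero]
    rw [mul_div_assoc, div_self hs', mul_one]
  · have h1 := (Real.hasDerivAt_rpow_const (x := |t|) (p := r)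
      (Or.inl (abs_ne_zero.mpr ht))).comp t (hasDerivAt_abs ht)
    have h2 := h1.mul (hasDerivAt_id t)
    have hst : (SignType.sign t : ℝ) * t = |t| := by
      rcases ht.lt_or_gt with h | h
      · rw [sign_neg h, abs_of_neg h]; simp
      · rw [sign_pos h, abs_of_pos h]; simp
    have hr1 : |t| ^ (r - 1) * |t| = |t| ^ r := by
      rw [← Real.rpow_add_one (abs_ne_zero.mpr ht) (r - 1), sub_add_cancel]
    have h2' : HasDerivAt (fun s : ℝ => |s| ^ r * s) _ t := h2
    convert h2' using 1
    simp only [Function.comp_apply, id_eq, mul_one]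
    rw [mul_assoc, hst, mul_assoc, hr1]
    ring

private lemma aux_deriv1 {p q : ℝ} (hp : 0 < p) (hq : 0 < q) (t : ℝ) :
    HasDerivAt (fun t : ℝ => |t| ^ (q + 2) / (q + 2) + |t| ^ (p + 2) / (p + 2))
      (|t| ^ q * t + |t| ^ p * t) t := by
  have h1 := (hasDerivAt_abs_rpow t (p := q + 2) (by linarith)).div_const (q + 2)
  have h2 := (hasDerivAt_abs_rpow t (p := p + 2) (by linarith)).div_const (p + 2)
  have e1 : q + 2 - 2 = q := by ring
  have e2 : p + 2 - 2 = p := by ring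
  rw [e1] at h1; rw [e2] at h2
  have h3 : HasDerivAt (fun t : ℝ => |t| ^ (q + 2) / (q + 2) + |t| ^ (p + 2) / (p + 2)) _ t :=
    h1.add h2
  convert h3 using 1
  field_simp

private lemma aux_deriv2 {p q : ℝ} (hp : 0 < p) (hq : 0 < q) (t : ℝ) :
    HasDerivAt (fun t : ℝ => |t| ^ q * t + |t| ^ p * t)
      ((q + 1) * |t| ^ q + (p + 1) * |t| ^ p) t :=
  (hasDerivAt_abs_rpow_mul hq t).add (hasDerivAt_abs_rpow_mul hp t)

private lemma coord_abs_le_norm (w : EuclideanSpace ℝ (Fin 4)) (i : Fin 4) : |w i| ≤ ‖w‖ := by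
  rw [EuclideanSpace.norm_eq]
  have h1 : |w i| = Real.sqrt (‖w i‖ ^ 2) := by
    rw [Real.sqrt_sq_eq_abs, Real.norm_eq_abs, abs_abs]
  rw [h1]
  exact Real.sqrt_le_sqrt (Finset.single_le_sum (f := fun j => ‖w j‖ ^ 2) (fun j _ => sq_nonneg _) (Finset.mem_univ i))

private lemma proj_norm_le_one (i : Fin 4) : ‖EuclideanSpace.proj (𝕜 := ℝ) i‖ ≤ 1 :=
  ContinuousLinearMap.opNorm_le_bound _ zero_le_one fun w => by
    rw [one_mul]; exact coord_abs_le_norm w i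

private lemma first_deriv_eq {p q : ℝ} (hp : 0 < p) (hq : 0 < q)
    (w : EuclideanSpace ℝ (Fin 4)) :
    HasFDerivAt (fun w : EuclideanSpace ℝ (Fin 4) =>
        |w 0| ^ (q + 2) / (q + 2) + |w 0| ^ (p + 2) / (p + 2)
          + |w 2| ^ (q + 2) / (q + 2) + |w 2| ^ (p + 2) / (p + 2))
      ((|w 0| ^ q * w 0 + |w 0| ^ p * w 0) • EuclideanSpace.proj (𝕜 := ℝ) (0 : Fin 4)
        + (|w 2| ^ q * w 2 + |w 2| ^ p * w 2) • EuclideanSpace.proj (𝕜 := ℝ) (2 : Fin 4)) w := by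
  have h0 : HasFDerivAt (fun w : EuclideanSpace ℝ (Fin 4) =>
      |w 0| ^ (q + 2) / (q + 2) + |w 0| ^ (p + 2) / (p + 2))
      ((|w 0| ^ q * w 0 + |w 0| ^ p * w 0) • EuclideanSpace.proj (𝕜 := ℝ) (0 : Fin 4)) w :=
    (aux_deriv1 hp hq (w 0)).comp_hasFDerivAt (h₂ := fun t : ℝ => |t| ^ (q + 2) / (q + 2) + |t| ^ (p + 2) / (p + 2)) w
      (EuclideanSpace.proj (𝕜 := ℝ) (0 : Fin 4)).hasFDerivAt
  have h2 : HasFDerivAt (fun w : EuclideanSpace ℝ (Fin 4) =>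
      |w 2| ^ (q + 2) / (q + 2) + |w 2| ^ (p + 2) / (p + 2))
      ((|w 2| ^ q * w 2 + |w 2| ^ p * w 2) • EuclideanSpace.proj (𝕜 := ℝ) (2 : Fin 4)) w :=
    (aux_deriv1 hp hq (w 2)).comp_hasFDerivAt (h₂ := fun t : ℝ => |t| ^ (q + 2) / (q + 2) + |t| ^ (p + 2) / (p + 2)) w
      (EuclideanSpace.proj (𝕜 := ℝ) (2 : Fin 4)).hasFDerivAt
  exact (h0.add h2).congr_of_eventuallyEq
    (Filter.Eventually.of_forall fun w' => by simp only [Pi.add_apply]; ring)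

private lemma second_deriv_norm_bound {p q : ℝ} (hp : 0 < p) (hq : 0 < q) (hpq : p < q)
    (w : EuclideanSpace ℝ (Fin 4)) :
    ‖iteratedFDeriv ℝ 2 (fun w : EuclideanSpace ℝ (Fin 4) =>
        |w 0| ^ (q + 2) / (q + 2) + |w 0| ^ (p + 2) / (p + 2)
          + |w 2| ^ (q + 2) / (q + 2) + |w 2| ^ (p + 2) / (p + 2)) w‖
      ≤ 2 * (q + 1) * (‖w‖ ^ p + ‖w‖ ^ q) := by
  set π0 := EuclideanSpace.proj (𝕜 := ℝ) (0 : Fin 4) with hπ0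
  set π2 := EuclideanSpace.proj (𝕜 := ℝ) (2 : Fin 4) with hπ2
  set D2 : EuclideanSpace ℝ (Fin 4) →L[ℝ] (EuclideanSpace ℝ (Fin 4) →L[ℝ] ℝ) :=
    (ContinuousLinearMap.toSpanSingleton ℝ π0).comp
        (((q + 1) * |w 0| ^ q + (p + 1) * |w 0| ^ p) • π0)
      + (ContinuousLinearMap.toSpanSingleton ℝ π2).comp
        (((q + 1) * |w 2| ^ q + (p + 1) * |w 2| ^ p) • π2) with hD2
  have hfderiv : fderiv ℝ (fun w : EuclideanSpace ℝ (Fin 4) =>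
      |w 0| ^ (q + 2) / (q + 2) + |w 0| ^ (p + 2) / (p + 2)
        + |w 2| ^ (q + 2) / (q + 2) + |w 2| ^ (p + 2) / (p + 2))
      = fun w : EuclideanSpace ℝ (Fin 4) =>
        (|w 0| ^ q * w 0 + |w 0| ^ p * w 0) • π0 + (|w 2| ^ q * w 2 + |w 2| ^ p * w 2) • π2 :=
    funext fun w => (first_deriv_eq hp hq w).fderiv
  have hsnd : HasFDerivAt (fun w : EuclideanSpace ℝ (Fin 4) =>
      (|w 0| ^ q * w 0 + |w 0| ^ p * w 0) • π0 + (|w 2| ^ q * w 2 + |w 2| ^ p * w 2) • π2)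
      D2 w := by
    have h0 : HasFDerivAt (fun w : EuclideanSpace ℝ (Fin 4) =>
        |w 0| ^ q * w 0 + |w 0| ^ p * w 0)
        (((q + 1) * |w 0| ^ q + (p + 1) * |w 0| ^ p) • π0) w :=
      (aux_deriv2 hp hq (w 0)).comp_hasFDerivAt (h₂ := fun t : ℝ => |t| ^ q * t + |t| ^ p * t) w π0.hasFDerivAt
    have h2 : HasFDerivAt (fun w : EuclideanSpace ℝ (Fin 4) =>
        |w 2| ^ q * w 2 + |w 2| ^ p * w 2)
        (((q + 1) * |w 2| ^ q + (p + 1) * |w 2| ^ p) • π2) w :=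
      (aux_deriv2 hp hq (w 2)).comp_hasFDerivAt (h₂ := fun t : ℝ => |t| ^ q * t + |t| ^ p * t) w π2.hasFDerivAt
    exact ((ContinuousLinearMap.toSpanSingleton ℝ π0).hasFDerivAt.comp w h0).add
      ((ContinuousLinearMap.toSpanSingleton ℝ π2).hasFDerivAt.comp w h2)
  have key : ‖iteratedFDeriv ℝ 2 (fun w : EuclideanSpace ℝ (Fin 4) =>
      |w 0| ^ (q + 2) / (q + 2) + |w 0| ^ (p + 2) / (p + 2)
        + |w 2| ^ (q + 2) / (q + 2) + |w 2| ^ (p + 2) / (p + 2)) w‖ = ‖D2‖ := by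
    rw [show (2 : ℕ) = 1 + 1 from rfl, ← norm_iteratedFDeriv_fderiv,
      norm_iteratedFDeriv_one,
      hfderiv, hsnd.fderiv]
  rw [key]
  have hbound : ∀ (pr : EuclideanSpace ℝ (Fin 4) →L[ℝ] ℝ) (c : ℝ), 0 ≤ c → ‖pr‖ ≤ 1 →
      ‖(ContinuousLinearMap.toSpanSingleton ℝ pr).comp (c • pr)‖ ≤ c := by
    intro pr c hc hpr
    have hprn : (0 : ℝ) ≤ ‖pr‖ := by exact norm_nonneg pr
    have hcomp : ‖(ContinuousLinearMap.toSpanSingleton ℝ pr).comp (c • pr)‖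
        ≤ ‖ContinuousLinearMap.toSpanSingleton ℝ pr‖ * ‖c • pr‖ := by
      exact ContinuousLinearMap.opNorm_comp_le _ _
    have hts : ‖ContinuousLinearMap.toSpanSingleton ℝ pr‖ = ‖pr‖ := by
      exact ContinuousLinearMap.norm_toSpanSingleton (𝕜 := ℝ) pr
    have hsm : ‖c • pr‖ = c * ‖pr‖ := by
      have h : ‖c • pr‖ = ‖c‖ * ‖pr‖ := by exact norm_smul c pr
      rw [Real.norm_eq_abs, abs_of_nonneg hc] at h
      exact h
    rw [hts, hsm] at hcomp
    nlinarith [hcomp, hpr, hprn, hc, mul_nonneg hprn hc]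
  have hpr0le : ‖π0‖ ≤ 1 := by exact proj_norm_le_one 0
  have hpr2le : ‖π2‖ ≤ 1 := by exact proj_norm_le_one 2
  have hc0 : (0 : ℝ) ≤ (q + 1) * |w 0| ^ q + (p + 1) * |w 0| ^ p := by positivity
  have hc2 : (0 : ℝ) ≤ (q + 1) * |w 2| ^ q + (p + 1) * |w 2| ^ p := by positivity
  have h0b := hbound π0 _ hc0 hpr0le
  have h2b := hbound π2 _ hc2 hpr2le
  have hD2n : ‖D2‖ ≤ ‖(ContinuousLinearMap.toSpanSingleton ℝ π0).comp
        (((q + 1) * |w 0| ^ q + (p + 1) * |w 0| ^ p) • π0)‖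
      + ‖(ContinuousLinearMap.toSpanSingleton ℝ π2).comp
        (((q + 1) * |w 2| ^ q + (p + 1) * |w 2| ^ p) • π2)‖ := by
    rw [hD2]
    exact norm_add_le ((ContinuousLinearMap.toSpanSingleton ℝ π0).comp
        (((q + 1) * |w 0| ^ q + (p + 1) * |w 0| ^ p) • π0))
      ((ContinuousLinearMap.toSpanSingleton ℝ π2).comp
        (((q + 1) * |w 2| ^ q + (p + 1) * |w 2| ^ p) • π2))
  have e1 : |w 0| ^ q ≤ ‖w‖ ^ q := Real.rpow_le_rpow (abs_nonneg _) (coord_abs_le_norm w 0) hq.le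
  have e2 : |w 0| ^ p ≤ ‖w‖ ^ p := Real.rpow_le_rpow (abs_nonneg _) (coord_abs_le_norm w 0) hp.le
  have e3 : |w 2| ^ q ≤ ‖w‖ ^ q := Real.rpow_le_rpow (abs_nonneg _) (coord_abs_le_norm w 2) hq.le
  have e4 : |w 2| ^ p ≤ ‖w‖ ^ p := Real.rpow_le_rpow (abs_nonneg _) (coord_abs_le_norm w 2) hp.le
  have hwp : (0 : ℝ) ≤ ‖w‖ ^ p := Real.rpow_nonneg (norm_nonneg w) p
  have hwq : (0 : ℝ) ≤ ‖w‖ ^ q := Real.rpow_nonneg (norm_nonneg w) q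
  linarith [h0b, h2b, hD2n, e1, e2, e3, e4, hwp, hwq,
    mul_le_mul_of_nonneg_left e2 (by linarith : (0:ℝ) ≤ p + 1),
    mul_le_mul_of_nonneg_left e4 (by linarith : (0:ℝ) ≤ p + 1),
    mul_le_mul_of_nonneg_left e1 (by linarith : (0:ℝ) ≤ q + 1),
    mul_le_mul_of_nonneg_left e3 (by linarith : (0:ℝ) ≤ q + 1),
    mul_nonneg (by linarith : (0:ℝ) ≤ q - p) hwp]

/-- The example nonlinearity
`F(x₁,x₂,x₃,x₄) = |x₁|^(q+2)/(q+2) + |x₁|^(p+2)/(p+2) + |x₃|^(q+2)/(q+2) + |x₃|^(p+2)/(p+2)`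
satisfies condition (b) with exponents `q₁ = p` and `q₂ = q`:
`‖D²F(w)‖ ≤ C(‖w‖^p + ‖w‖^q)` for all `w`. -/
theorem stmt_14 (p q : ℝ) (hp : 0 < p) (hpq : p < q)
    (F : EuclideanSpace ℝ (Fin 4) → ℝ)
    (hFdef : ∀ w : EuclideanSpace ℝ (Fin 4),
      F w = |w 0| ^ (q + 2) / (q + 2) + |w 0| ^ (p + 2) / (p + 2)
          + |w 2| ^ (q + 2) / (q + 2) + |w 2| ^ (p + 2) / (p + 2)) :
    ∃ C > 0, ∀ w : EuclideanSpace ℝ (Fin 4),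
      ‖iteratedFDeriv ℝ 2 F w‖ ≤ C * (‖w‖ ^ p + ‖w‖ ^ q) := by
  have hq : 0 < q := hp.trans hpq
  have hF : F = fun w : EuclideanSpace ℝ (Fin 4) =>
      |w 0| ^ (q + 2) / (q + 2) + |w 0| ^ (p + 2) / (p + 2)
        + |w 2| ^ (q + 2) / (q + 2) + |w 2| ^ (p + 2) / (p + 2) := funext hFdef
  refine ⟨2 * (q + 1), by linarith, fun w => ?_⟩
  rw [hF]
  exact second_deriv_norm_bound hp hq hpq w
end
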